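/- Let I ⊆ S be a stable monomial ideal with minimal monomial generators listed in decreasing lexicographic order m_1 >_lex m_2 >_lex ... >_lex m_t (lexicographic order with x_1 > ... > x_n). Then for every 1 < i ≤ t, the colon ideal (m_1, ..., m_{i−1}) : m_i equals the ideal generated by the variables x_j with 1 ≤ j < max(supp(m_i)). In particular, I has linear quotients with respect to this ordering, with critical-index sets A_i = {1, ..., max(supp(m_i)) − 1}. -/

import Mathlib

open MvPolynomial

/-- Let `I ⊆ S = k[x_1,…,x_n]` be a stable monomial ideal with minimal
monomial generators listed in decreasing lexicographic order (`x_1 > … > x_n`).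
Then for every `1 < i ≤ t` the colon ideal `(m_1, …, m_{i−1}) : m_i` equals the ideal
generated by the variables `x_j` with `j < max(supp(m_i))`.  In particular `I` has linear
quotients with respect to this ordering, with critical-index sets
`A_i = { j : x_j ∈ (m_1,…,m_{i−1}) : m_i } = {1, …, max(supp(m_i)) − 1}`.
(Generators are encoded by exponent vectors `m : Fin t → (Fin n →₀ ℕ)`; `max(supp(m_i))`
is encoded as an element `b ∈ supp(m_i)` with `l ≤ b` for all `l ∈ supp(m_i)`.) -/
theorem stmt_8 (k : Type) [Field k] (n t : ℕ)
    (m : Fin t → (Fin n →₀ ℕ))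
    (hmin : ∀ i j : Fin t, i ≠ j → ¬ m i ≤ m j)
    -- `I` is stable: for every monomial `x^α ∈ I` and every `i < max(supp α)`,
    -- `x_i·x^α/x_{max(supp α)} ∈ I`.
    (hstable : ∀ α : Fin n →₀ ℕ,
      monomial α (1 : k) ∈ Ideal.span (Set.range fun i => monomial (m i) (1 : k)) →
      ∀ b ∈ α.support, (∀ l ∈ α.support, l ≤ b) →
      ∀ i : Fin n, i < b →
        monomial (α + Finsupp.single i 1 - Finsupp.single b 1) (1 : k) ∈
          Ideal.span (Set.range fun i => monomial (m i) (1 : k)))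
    -- the generators are listed in decreasing lexicographic order
    (hsort : ∀ i j : Fin t, i < j → toLex (m j) < toLex (m i)) :
    ∀ i : Fin t, 0 < (i : ℕ) →
      (Submodule.colon
          (Ideal.span ((fun j => monomial (m j) (1 : k)) '' {j | j < i}))
          (Ideal.span {monomial (m i) (1 : k)})
        = Ideal.span ((fun g => (X g : MvPolynomial (Fin n) k)) ''
            {g | ∃ b ∈ (m i).support, (∀ l ∈ (m i).support, l ≤ b) ∧ g < b}))
      ∧
      {j : Fin n | (X j : MvPolynomial (Fin n) k) ∈
          Submodule.colon
            (Ideal.span ((fun l => monomial (m l) (1 : k)) '' {l | l < i}))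
            (Ideal.span {monomial (m i) (1 : k)})}
        = {g | ∃ b ∈ (m i).support, (∀ l ∈ (m i).support, l ≤ b) ∧ g < b} := by
  intro i hi
  classical
  -- basic facts about the full monomial ideal I
  have hrange : (Set.range fun j => monomial (m j) (1 : k)) =
      (fun s => monomial s (1 : k)) '' (Set.range m) := by
    rw [← Set.range_comp]; rfl
  have hImem : ∀ j, monomial (m j) (1 : k) ∈
      Ideal.span (Set.range fun j => monomial (m j) (1 : k)) :=
    fun j => Ideal.subset_span ⟨j, rfl⟩
  have hIdiv : ∀ α : Fin n →₀ ℕ,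
      monomial α (1 : k) ∈ Ideal.span (Set.range fun j => monomial (m j) (1 : k)) →
      ∃ j, m j ≤ α := by
    intro α hα
    rw [hrange, mem_ideal_span_monomial_image] at hα
    have hmem : α ∈ (monomial α (1 : k)).support := by
      rw [support_monomial, if_neg one_ne_zero]; exact Finset.mem_singleton_self _
    obtain ⟨s, ⟨j, rfl⟩, hle⟩ := hα α hmem
    exact ⟨j, hle⟩
  -- m i ≠ 0
  have ht : 0 < t := i.pos
  have hune : m i ≠ 0 := by
    intro h0
    exact hmin i ⟨0, ht⟩ (Fin.ne_of_val_ne hi.ne') (h0 ▸ zero_le)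
  have hsupp : (m i).support.Nonempty := Finsupp.support_nonempty_iff.mpr hune
  set b := (m i).support.max' hsupp with hbdef
  have hbmem : b ∈ (m i).support := Finset.max'_mem _ _
  have hbmax : ∀ l ∈ (m i).support, l ≤ b := fun l hl => Finset.le_max' _ _ hl
  have hbne : m i b ≠ 0 := Finsupp.mem_support_iff.mp hbmem
  have hsetb : {g | ∃ b' ∈ (m i).support, (∀ l ∈ (m i).support, l ≤ b') ∧ g < b'}
      = {g | g < b} := by
    ext g
    constructor
    · rintro ⟨b', hb'm, hb'max, hgb'⟩
      have : b' = b := le_antisymm (hbmax b' hb'm) (hb'max b hbmem)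
      exact this ▸ hgb'
    · exact fun h => ⟨b, hbmem, hbmax, h⟩
  -- the measure
  set μ : (Fin n →₀ ℕ) → ℕ := fun f => ∑ x : Fin n, x.1 * f x with hμdef
  have hμmono : ∀ f g : Fin n →₀ ℕ, f ≤ g → μ f ≤ μ g := fun f g h =>
    Finset.sum_le_sum fun x _ => Nat.mul_le_mul_left _ (Finsupp.le_def.mp h x)
  have hμadd : ∀ (f : Fin n →₀ ℕ) (a : Fin n), μ (f + Finsupp.single a 1) = μ f + a.1 := by
    intro f a
    simp only [hμdef, Finsupp.add_apply, Nat.mul_add, Finset.sum_add_distrib]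
    congr 1
    rw [Fintype.sum_eq_single a (fun x hx => by
      rw [Finsupp.single_apply, if_neg (Ne.symm hx), Nat.mul_zero])]
    rw [Finsupp.single_apply, if_pos rfl, Nat.mul_one]
  -- key induction: from a generator ≤ m i + e_g different from m i we can find a
  -- lex-larger generator ≤ m i + e_g
  have key : ∀ M : ℕ, ∀ g : Fin n, g < b → ∀ j : Fin t,
      m j ≤ m i + Finsupp.single g 1 → m j ≠ m i → μ (m j) ≤ M →
      ∃ j', toLex (m i) < toLex (m j') ∧ m j' ≤ m i + Finsupp.single g 1 := by
    intro M
    induction M using Nat.strong_induction_on with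
    | _ M ih =>
      intro g hg j hle hne hμj
      by_cases hcase : toLex (m i) < toLex (m j)
      · exact ⟨j, hcase, hle⟩
      have hlex : toLex (m j) < toLex (m i) :=
        lt_of_le_of_ne (not_lt.mp hcase) (by simpa [toLex_inj] using hne)
      obtain ⟨e, hebelow, helt⟩ := Finsupp.Lex.lt_iff.mp hlex
      have helt' : m j e < m i e := helt
      have hji : j ≠ i := fun h => hne (by rw [h])
      have hnle : ¬ m j ≤ m i := hmin j i hji
      obtain ⟨g0, hg0⟩ : ∃ g0, m i g0 < m j g0 := by
        by_contra h
        push_neg at h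
        exact hnle (Finsupp.le_def.mpr h)
      have hg0g : g0 = g := by
        by_contra hne'
        have h1 := Finsupp.le_def.mp hle g0
        rw [Finsupp.add_apply, Finsupp.single_apply, if_neg (Ne.symm hne')] at h1
        omega
      subst hg0g
      have heg : e < g0 := by
        rcases lt_trichotomy e g0 with h | h | h
        · exact h
        · exfalso; rw [h] at helt'; omega
        · exfalso; have := hebelow g0 h; simp only [ofLex_toLex] at this; omega
      have hsj : (m j).support.Nonempty :=
        ⟨g0, Finsupp.mem_support_iff.mpr (by omega)⟩
      set c := (m j).support.max' hsj with hcdef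
      have hcmem : c ∈ (m j).support := Finset.max'_mem _ _
      have hcmax : ∀ l ∈ (m j).support, l ≤ c := fun l hl => Finset.le_max' _ _ hl
      have hgc : g0 ≤ c := hcmax g0 (Finsupp.mem_support_iff.mpr (by omega))
      have hec : e < c := lt_of_lt_of_le heg hgc
      have hecne : e ≠ c := ne_of_lt hec
      have hmjc : 1 ≤ m j c := Nat.one_le_iff_ne_zero.mpr (Finsupp.mem_support_iff.mp hcmem)
      have hw'mem := hstable (m j) (hImem j) c hcmem hcmax e hec
      set w' := m j + Finsupp.single e 1 - Finsupp.single c 1 with hw'def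
      have hw'apply : ∀ x, w' x = m j x + Finsupp.single e 1 x - Finsupp.single c 1 x := by
        intro x
        rw [hw'def, Finsupp.tsub_apply, Finsupp.add_apply]
      have hw'le : w' ≤ m i + Finsupp.single g0 1 := by
        rw [Finsupp.le_def]
        intro x
        have h1 := Finsupp.le_def.mp hle x
        rw [hw'apply x]
        rw [Finsupp.add_apply] at h1 ⊢
        rcases eq_or_ne x e with rfl | hxe
        · rw [Finsupp.single_apply, if_pos rfl, Finsupp.single_apply, if_neg (Ne.symm hecne)]
          have : (Finsupp.single g0 1 : Fin n →₀ ℕ) x = 0 := by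
            rw [Finsupp.single_apply, if_neg (Ne.symm (ne_of_lt heg))]
          omega
        · rw [Finsupp.single_apply (a := e), if_neg (fun h => hxe h.symm)]
          have : m j x - Finsupp.single c 1 x ≤ m j x := Nat.sub_le _ _
          omega
      obtain ⟨j', hj'le⟩ := hIdiv w' hw'mem
      have hj'ne : m j' ≠ m i := by
        intro hEq
        have hile : m i ≤ w' := hEq ▸ hj'le
        rcases eq_or_ne c g0 with hcg | hcg
        · -- then max supp (m j) = g0 < b, but m i b ≠ 0 and m i ≤ w'
          have hbc : c < b := hcg ▸ hg
          have h0 : m j b = 0 := by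
            by_contra h
            exact absurd (hcmax b (Finsupp.mem_support_iff.mpr h)) (not_le.mpr hbc)
          have h2 := Finsupp.le_def.mp hile b
          rw [hw'apply b, Finsupp.single_apply, if_neg (ne_of_lt (hec.trans hbc)),
            Finsupp.single_apply, if_neg (ne_of_lt hbc)] at h2
          omega
        · have h1 := Finsupp.le_def.mp hile c
          have h2 := Finsupp.le_def.mp hle c
          rw [hw'apply c, Finsupp.single_apply, if_neg hecne,
            Finsupp.single_apply, if_pos rfl] at h1
          rw [Finsupp.add_apply, Finsupp.single_apply, if_neg (Ne.symm hcg)] at h2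
          omega
      -- the measure strictly decreases
      have hsle : Finsupp.single c 1 ≤ m j + Finsupp.single e 1 := by
        rw [Finsupp.le_def]
        intro x
        rcases eq_or_ne x c with rfl | hxc
        · rw [Finsupp.single_apply, if_pos rfl, Finsupp.add_apply]; omega
        · rw [Finsupp.single_apply, if_neg (fun h => hxc h.symm)]; omega
      have hw'add : w' + Finsupp.single c 1 = m j + Finsupp.single e 1 := by
        rw [hw'def, tsub_add_cancel_of_le hsle]
      have hμeq : μ w' + c.1 = μ (m j) + e.1 := by
        rw [← hμadd w' c, hw'add, hμadd]
      have hμlt : μ (m j') < M := by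
        have h1 : μ (m j') ≤ μ w' := hμmono _ _ hj'le
        have h2 : e.1 < c.1 := hec
        omega
      exact ih (μ (m j')) hμlt g0 hg j' (hj'le.trans hw'le) hj'ne le_rfl
  -- for each g < b there is an earlier generator dividing x_g * m i
  have hXmono : ∀ g : Fin n, g < b → ∃ j', j' < i ∧ m j' ≤ m i + Finsupp.single g 1 := by
    intro g hg
    have hw0 := hstable (m i) (hImem i) b hbmem hbmax g hg
    obtain ⟨j0, hj0⟩ := hIdiv _ hw0
    have hle0 : m i + Finsupp.single g 1 - Finsupp.single b 1 ≤ m i + Finsupp.single g 1 :=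
      tsub_le_self
    have hj0ne : m j0 ≠ m i := by
      intro hEq
      have h1 := Finsupp.le_def.mp (hEq ▸ hj0) b
      rw [Finsupp.tsub_apply, Finsupp.add_apply, Finsupp.single_apply,
        if_neg (ne_of_lt hg), Finsupp.single_apply, if_pos rfl] at h1
      omega
    obtain ⟨j', hj'lex, hj'le⟩ := key (μ (m j0)) g hg j0 (hj0.trans hle0) hj0ne le_rfl
    refine ⟨j', ?_, hj'le⟩
    rcases lt_trichotomy j' i with h | h | h
    · exact h
    · exact absurd hj'lex (by rw [h]; exact lt_irrefl _)
    · exact absurd (hsort i j' h) (asymm hj'lex)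
  -- membership characterization for the truncated ideal
  have himage : ((fun j => monomial (m j) (1 : k)) '' {j | j < i}) =
      (fun s => monomial s (1 : k)) '' (m '' {j | j < i}) := by
    rw [Set.image_image]
  have hmemN : ∀ α : Fin n →₀ ℕ,
      monomial α (1 : k) ∈ Ideal.span ((fun j => monomial (m j) (1 : k)) '' {j | j < i}) ↔
      ∃ j, j < i ∧ m j ≤ α := by
    intro α
    rw [himage, mem_ideal_span_monomial_image]
    constructor
    · intro h
      have hmem : α ∈ (monomial α (1 : k)).support := by
        rw [support_monomial, if_neg one_ne_zero]; exact Finset.mem_singleton_self _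
      obtain ⟨s, ⟨j, hj, rfl⟩, hle⟩ := h α hmem
      exact ⟨j, hj, hle⟩
    · rintro ⟨j, hj, hle⟩ xi hxi
      rw [support_monomial, if_neg one_ne_zero, Finset.mem_singleton] at hxi
      exact ⟨m j, ⟨j, hj, rfl⟩, hxi ▸ hle⟩
  -- the first conjunct
  have hfirst : Submodule.colon
      (Ideal.span ((fun j => monomial (m j) (1 : k)) '' {j | j < i}))
      (Ideal.span {monomial (m i) (1 : k)})
      = Ideal.span ((fun g => (X g : MvPolynomial (Fin n) k)) ''
          {g | ∃ b ∈ (m i).support, (∀ l ∈ (m i).support, l ≤ b) ∧ g < b}) := by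
    apply le_antisymm
    · intro p hp
      rw [Ideal.mem_colon_span_singleton] at hp
      rw [himage, mem_ideal_span_monomial_image] at hp
      have : Ideal.span ((fun g => (X g : MvPolynomial (Fin n) k)) ''
          {g | ∃ b ∈ (m i).support, (∀ l ∈ (m i).support, l ≤ b) ∧ g < b})
          = Ideal.span (X '' {g | g < b}) := by rw [hsetb]
      rw [this, mem_ideal_span_X_image]
      intro β hβ
      have hc : (β + m i) ∈ (p * monomial (m i) (1 : k)).support := by
        rw [mem_support_iff, coeff_mul_monomial, mul_one]
        exact mem_support_iff.mp hβ
      obtain ⟨s, ⟨j, hji, rfl⟩, hjle⟩ := hp (β + m i) hc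
      -- Lemma B: β must have a nonzero entry below b
      have hlexji : toLex (m i) < toLex (m j) := hsort j i hji
      obtain ⟨e, hbelow, hlt⟩ := Finsupp.Lex.lt_iff.mp hlexji
      have hlt' : m i e < m j e := hlt
      by_cases heb : e < b
      · refine ⟨e, heb, ?_⟩
        have h1 := Finsupp.le_def.mp hjle e
        rw [Finsupp.add_apply] at h1
        omega
      · exfalso
        apply hmin i j (fun h => absurd h.symm (ne_of_lt hji))
        rw [Finsupp.le_def]
        intro x
        rcases lt_trichotomy x e with h | h | h
        · have := hbelow x h; simp only [ofLex_toLex] at this; omega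
        · subst h; omega
        · have hx0 : m i x = 0 := by
            by_contra h0
            have := hbmax x (Finsupp.mem_support_iff.mpr h0)
            have : x ≤ e := le_trans this (not_lt.mp heb)
            omega
          omega
    · have : Ideal.span ((fun g => (X g : MvPolynomial (Fin n) k)) ''
          {g | ∃ b ∈ (m i).support, (∀ l ∈ (m i).support, l ≤ b) ∧ g < b})
          = Ideal.span (X '' {g | g < b}) := by rw [hsetb]
      rw [this, Ideal.span_le]
      rintro _ ⟨g, hg, rfl⟩
      rw [SetLike.mem_coe, Ideal.mem_colon_span_singleton]
      obtain ⟨j, hji, hjle⟩ := hXmono g hg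
      have hXm : (X g : MvPolynomial (Fin n) k) * monomial (m i) 1
          = monomial (m i + Finsupp.single g 1) 1 := by
        rw [X, monomial_mul, one_mul, add_comm]
      rw [hXm]
      exact (hmemN _).mpr ⟨j, hji, hjle⟩
  refine ⟨hfirst, ?_⟩
  ext x
  simp only [Set.mem_setOf_eq]
  constructor
  · intro hx
    rw [hfirst] at hx
    have hXb : ((fun g => (X g : MvPolynomial (Fin n) k)) ''
        {g | ∃ b ∈ (m i).support, (∀ l ∈ (m i).support, l ≤ b) ∧ g < b})
        = X '' {g | g < b} := by rw [hsetb]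
    rw [hXb, mem_ideal_span_X_image] at hx
    obtain ⟨g, hgb, hgne⟩ := hx (Finsupp.single x 1) (by rw [support_X]; simp)
    have hgx : g = x := by
      by_contra h
      rw [Finsupp.single_apply, if_neg (fun h' => h h'.symm)] at hgne
      exact hgne rfl
    exact ⟨b, hbmem, hbmax, hgx ▸ hgb⟩
  · intro hx
    rw [hfirst]
    exact Ideal.subset_span ⟨x, hx, rfl⟩
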